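/- Let L ≥ 2. Index the standard basis of ℂ^{2^L} by functions v : {1,…,L} → {0,1}, and let R be the permutation matrix of lattice inversion, i.e. R sends the basis vector e_v to e_{v'} where v'(j) = v(L+1−j). Let 𝔦_OBC be the Lie algebra over ℝ generated by {i·(Z_1 + ⋯ + Z_L), i·(X_1·X_2 + ⋯ + X_{L−1}·X_L)} inside the 2^L × 2^L complex matrices. Then every element H ∈ 𝔦_OBC commutes with R: H·R = R·H. -/

import Mathlib

open Matrix

attribute [local instance 100] LieRing.ofAssociativeRing

noncomputable section

/-- The Pauli matrix X. -/
def PX : Matrix (Fin 2) (Fin 2) ℂ := !![0, 1; 1, 0]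
/-- The Pauli matrix Y. -/
def PY : Matrix (Fin 2) (Fin 2) ℂ := !![0, -Complex.I; Complex.I, 0]
/-- The Pauli matrix Z. -/
def PZ : Matrix (Fin 2) (Fin 2) ℂ := !![1, 0; 0, -1]

/-- The operator `M_j = I₂^{⊗ j} ⊗ M ⊗ I₂^{⊗ (L-1-j)}` acting as `M` on site `j` and as the
identity elsewhere, on `(ℂ²)^{⊗ L} ≅ ℂ^{2^L}` whose standard basis is indexed by functions
`v : Fin L → Fin 2`. -/
def site (L : ℕ) (M : Matrix (Fin 2) (Fin 2) ℂ) (j : Fin L) :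
    Matrix (Fin L → Fin 2) (Fin L → Fin 2) ℂ :=
  fun v w => ∏ k : Fin L, if k = j then M (v k) (w k) else (if v k = w k then 1 else 0)

/-- The Pauli string `T^{AB}_{j,k} = A_j · Z_{j+1} · Z_{j+2} ⋯ Z_{k-1} · B_k`. -/
def pauliString (L : ℕ) (A B : Matrix (Fin 2) (Fin 2) ℂ) (j k : Fin L) :
    Matrix (Fin L → Fin 2) (Fin L → Fin 2) ℂ :=
  site L A j *
    (((List.finRange L).filter (fun m => j < m ∧ m < k)).map (site L PZ)).prod *
    site L B k

/-- The parity operator `P = Z_1 · Z_2 ⋯ Z_L`. -/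
def parity (L : ℕ) : Matrix (Fin L → Fin 2) (Fin L → Fin 2) ℂ :=
  ((List.finRange L).map (site L PZ)).prod

/-- The sum `Z_1 + Z_2 + ⋯ + Z_L`. -/
def zSum (L : ℕ) : Matrix (Fin L → Fin 2) (Fin L → Fin 2) ℂ :=
  ∑ j : Fin L, site L PZ j

/-- The sum `X_1·X_2 + X_2·X_3 + ⋯ + X_{L-1}·X_L` (open boundary conditions). -/
def xxSumOBC (L : ℕ) : Matrix (Fin L → Fin 2) (Fin L → Fin 2) ℂ :=
  ∑ j : Fin (L - 1),
    site L PX ⟨(j : ℕ), by have := j.isLt; omega⟩ *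
      site L PX ⟨(j : ℕ) + 1, by have := j.isLt; omega⟩

/-- The lattice inversion on basis labels: `(revFun v) j = v (L + 1 - j)` (in `1`-based site
labels, i.e. `j ↦ L - 1 - j` in `0`-based labels). -/
def revFun (L : ℕ) (v : Fin L → Fin 2) : Fin L → Fin 2 :=
  fun j => v ⟨L - 1 - (j : ℕ), by have := j.isLt; omega⟩

/-- The permutation matrix `R` of lattice inversion, sending the standard basis vector `e_v`
to `e_{v'}` where `v' j = v (L + 1 - j)`. -/
def inversion (L : ℕ) : Matrix (Fin L → Fin 2) (Fin L → Fin 2) ℂ :=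
  fun w v => if w = revFun L v then 1 else 0

def rsig (L : ℕ) (j : Fin L) : Fin L := ⟨L - 1 - (j : ℕ), by have := j.isLt; omega⟩

lemma rsig_rsig (L : ℕ) (j : Fin L) : rsig L (rsig L j) = j := by
  simp only [rsig]; ext; simp; omega

lemma rsig_inj (L : ℕ) {j k : Fin L} (h : rsig L j = rsig L k) : j = k := by
  have := congrArg (rsig L) h; rwa [rsig_rsig, rsig_rsig] at this

def rEquiv (L : ℕ) : Fin L ≃ Fin L :=
  ⟨rsig L, rsig L, rsig_rsig L, rsig_rsig L⟩

lemma revFun_apply (L : ℕ) (v : Fin L → Fin 2) (j : Fin L) :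
    revFun L v j = v (rsig L j) := rfl

lemma site_mul_inversion (L : ℕ) (M : Matrix (Fin 2) (Fin 2) ℂ) (j : Fin L) :
    site L M j * inversion L = inversion L * site L M (rsig L j) := by
  ext v w
  rw [Matrix.mul_apply, Matrix.mul_apply]
  have h1 : ∀ u : Fin L → Fin 2, inversion L v u = if u = revFun L v then 1 else 0 := by
    intro u
    simp only [inversion]
    by_cases h : v = revFun L u
    · subst h
      have : u = revFun L (revFun L u) := by
        funext m; simp [revFun_apply, rsig_rsig]
      simp [← this]
    · have h' : u ≠ revFun L v := by
        intro hu; subst hu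
        exact h (by funext m; simp [revFun_apply, rsig_rsig])
      simp [h, h']
  simp only [h1]
  simp only [inversion, mul_ite, mul_one, mul_zero, ite_mul, one_mul, zero_mul,
    Finset.sum_ite_eq', Finset.mem_univ, if_true]
  show (∏ k : Fin L, if k = j then M (v k) (revFun L w k) else if v k = revFun L w k then 1 else 0)
     = ∏ k : Fin L, if k = rsig L j then M (revFun L v k) (w k) else if revFun L v k = w k then 1 else 0
  rw [← Equiv.prod_comp (rEquiv L)
    (fun k => if k = rsig L j then M (revFun L v k) (w k) else if revFun L v k = w k then 1 else 0)]
  refine Finset.prod_congr rfl fun k _ => ?_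
  have e1 : (rEquiv L) k = rsig L k := rfl
  have e2 : revFun L v (rsig L k) = v k := by rw [revFun_apply, rsig_rsig]
  have e3 : revFun L w k = w (rsig L k) := rfl
  rw [e1, e2, e3]
  by_cases hkj : k = j
  · subst hkj; simp
  · have hne : rsig L k ≠ rsig L j := fun hh => hkj (rsig_inj L hh)
    simp [hkj, hne]

lemma site_mul_site (L : ℕ) (M N : Matrix (Fin 2) (Fin 2) ℂ) {j k : Fin L} (h : j ≠ k) :
    site L M j * site L N k = fun v w => ∏ m : Fin L,
      if m = j then M (v m) (w m) else if m = k then N (v m) (w m)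
      else (if v m = w m then 1 else 0) := by
  ext v w
  rw [Matrix.mul_apply]
  simp only [site]
  simp_rw [← Finset.prod_mul_distrib]
  rw [show (Finset.univ : Finset (Fin L → Fin 2)) = Fintype.piFinset (fun _ => Finset.univ) from
    (Fintype.piFinset_univ).symm]
  rw [(Finset.prod_univ_sum (fun _ : Fin L => (Finset.univ : Finset (Fin 2)))
    (fun i y => (if i = j then M (v i) y else if v i = y then 1 else 0) *
                (if i = k then N y (w i) else if y = w i then 1 else 0))).symm]
  refine Finset.prod_congr rfl fun m _ => ?_
  by_cases hj : m = j
  · subst hj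
    have hk : m ≠ k := h
    simp [hk, mul_ite, mul_one, mul_zero]
  · by_cases hk : m = k
    · subst hk
      simp [hj, ite_mul, one_mul, zero_mul]
    · simp [hj, hk, ite_mul, mul_ite, one_mul, zero_mul, mul_one, mul_zero]

lemma site_comm (L : ℕ) (M N : Matrix (Fin 2) (Fin 2) ℂ) {j k : Fin L} (h : j ≠ k) :
    site L M j * site L N k = site L N k * site L M j := by
  rw [site_mul_site L M N h, site_mul_site L N M (Ne.symm h)]
  funext v w
  refine Finset.prod_congr rfl fun m _ => ?_
  by_cases hj : m = j <;> by_cases hk : m = k <;> simp_all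

lemma zSum_comm (L : ℕ) : zSum L * inversion L = inversion L * zSum L := by
  rw [zSum, Finset.sum_mul, Finset.mul_sum]
  rw [← Equiv.sum_comp (rEquiv L) (fun j => inversion L * site L PZ j)]
  exact Finset.sum_congr rfl fun j _ => site_mul_inversion L PZ j

def tEquiv (L : ℕ) : Fin (L - 1) ≃ Fin (L - 1) where
  toFun j := ⟨L - 2 - (j : ℕ), by have := j.isLt; omega⟩
  invFun j := ⟨L - 2 - (j : ℕ), by have := j.isLt; omega⟩
  left_inv j := by ext; have := j.isLt; simp; omega
  right_inv j := by ext; have := j.isLt; simp; omega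


lemma pair_conj (L : ℕ) (a b a' b' : Fin L) (hne : rsig L b ≠ rsig L a)
    (ha' : a' = rsig L b) (hb' : b' = rsig L a) :
    site L PX a * site L PX b * inversion L =
      inversion L * (site L PX a' * site L PX b') := by
  subst ha' hb'
  rw [mul_assoc, site_mul_inversion, ← mul_assoc, site_mul_inversion, mul_assoc,
    site_comm L PX PX (Ne.symm hne)]

lemma xxSum_comm (L : ℕ) : xxSumOBC L * inversion L = inversion L * xxSumOBC L := by
  rw [xxSumOBC, Finset.sum_mul, Finset.mul_sum]
  refine Fintype.sum_equiv (tEquiv L) _ _ fun i => ?_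
  have hi := i.isLt
  refine pair_conj L _ _ _ _ ?_ ?_ ?_
  · intro hc
    have := congrArg Fin.val hc
    simp only [rsig, Fin.val_mk] at this
    omega
  · ext
    simp only [rsig, tEquiv, Equiv.coe_fn_mk, Fin.val_mk]
    omega
  · ext
    simp only [rsig, tEquiv, Equiv.coe_fn_mk, Fin.val_mk]
    omega

def centralizerR (L : ℕ) : LieSubalgebra ℝ (Matrix (Fin L → Fin 2) (Fin L → Fin 2) ℂ) where
  carrier := {A | A * inversion L = inversion L * A}
  add_mem' := by
    intro a b ha hb
    simp only [Set.mem_setOf_eq] at *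
    rw [add_mul, mul_add, ha, hb]
  zero_mem' := by simp
  smul_mem' := by
    intro r a ha
    simp only [Set.mem_setOf_eq] at *
    rw [Matrix.smul_mul, Matrix.mul_smul, ha]
  lie_mem' := by
    intro a b ha hb
    simp only [Set.mem_setOf_eq, Ring.lie_def] at *
    rw [sub_mul, mul_sub, mul_assoc, hb, ← mul_assoc, ha, mul_assoc, mul_assoc, ha, ← mul_assoc,
      ← mul_assoc, hb, mul_assoc, mul_assoc]
/-- For `L ≥ 2`, every element of the Lie algebra `𝔦_OBC` generated over `ℝ` by
`{i·(Z_1 + ⋯ + Z_L), i·(X_1 X_2 + ⋯ + X_{L-1} X_L)}` commutes with the lattice-inversion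
permutation matrix `R`. -/
theorem indep_obc_commutes_inversion (L : ℕ) (hL : 2 ≤ L) :
    ∀ H ∈ LieSubalgebra.lieSpan ℝ (Matrix (Fin L → Fin 2) (Fin L → Fin 2) ℂ)
        {Complex.I • zSum L, Complex.I • xxSumOBC L},
      H * inversion L = inversion L * H := by
  have hsub : LieSubalgebra.lieSpan ℝ (Matrix (Fin L → Fin 2) (Fin L → Fin 2) ℂ)
      {Complex.I • zSum L, Complex.I • xxSumOBC L} ≤ centralizerR L := by
    rw [LieSubalgebra.lieSpan_le]
    rintro x (rfl | rfl)
    · show Complex.I • zSum L * inversion L = inversion L * (Complex.I • zSum L)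
      rw [Matrix.smul_mul, Matrix.mul_smul, zSum_comm]
    · show Complex.I • xxSumOBC L * inversion L = inversion L * (Complex.I • xxSumOBC L)
      rw [Matrix.smul_mul, Matrix.mul_smul, xxSum_comm]
  exact fun H hH => hsub hH
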